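/- A vector θ ∈ ℝⁿ with θ₁ ≤ θ₂ ≤ … ≤ θₙ is the optimal solution of the isotonic regression problem if and only if the partial sums Sᵢ := Σ_{j=1}^{i} ωⱼ(yⱼ − θⱼ) satisfy: Sᵢ ≥ 0 for all 1 ≤ i ≤ n−1, Sₙ = 0, and Sᵢ·(θ_{i+1} − θᵢ) = 0 for all 1 ≤ i ≤ n−1. -/

import Mathlib

open Finset

/-- The weighted least-squares objective of the isotonic regression problem. -/
noncomputable def irObj (n : ℕ) (ω y θ : Fin n → ℝ) : ℝ :=
  (1/2) * ∑ i, ω i * (y i - θ i)^2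

lemma ir_abel (r d : ℕ → ℝ) (n : ℕ) :
    ∑ i ∈ range (n+1), r i * d i
      = ∑ i ∈ range n, (∑ j ∈ range (i+1), r j) * (d i - d (i+1))
        + (∑ j ∈ range (n+1), r j) * d n := by
  induction n with
  | zero => simp
  | succ n ih =>
      rw [sum_range_succ, ih, sum_range_succ (fun i => (∑ j ∈ range (i+1), r j) * (d i - d (i+1))),
        sum_range_succ r (n+1)]
      ring

lemma ir_expand (n : ℕ) (ω y θ θ' : Fin n → ℝ) :
    irObj n ω y θ' = irObj n ω y θ
      + (∑ i, (-(ω i * (y i - θ i)) * (θ' i - θ i)))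
      + (1/2) * ∑ i, ω i * (θ' i - θ i)^2 := by
  rw [irObj, irObj, Finset.mul_sum, Finset.mul_sum, Finset.mul_sum,
    ← Finset.sum_add_distrib, ← Finset.sum_add_distrib]
  exact Finset.sum_congr rfl fun i _ => by ring

lemma ir_sum_Iic (n : ℕ) (f : Fin (n+1) → ℝ) (i : Fin (n+1)) :
    ∑ j ∈ Finset.Iic i, f j
      = ∑ j ∈ range (i.val+1), (if h : j < n+1 then f ⟨j, h⟩ else 0) := by
  have h1 : range (i.val+1) = Finset.Iic i.val := by
    ext j; simp [Nat.lt_succ_iff]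
  rw [h1, ← Fin.map_valEmbedding_Iic, Finset.sum_map]
  refine Finset.sum_congr rfl fun j _ => ?_
  simp [Fin.valEmbedding, j.isLt]

/-- KKT characterization of the optimal solution of isotonic regression:
a monotone `θ` is optimal iff the partial sums `Sᵢ = ∑_{j ≤ i} ωⱼ(yⱼ - θⱼ)` satisfy
`Sᵢ ≥ 0` for `i < n`, `Sₙ = 0`, and complementarity `Sᵢ (θ_{i+1} - θᵢ) = 0`. -/
theorem isotonic_regression_kkt
    (n : ℕ) (y ω θ : Fin (n+1) → ℝ) (hω : ∀ i, 0 < ω i) (hθ : Monotone θ) :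
    (∀ θ' : Fin (n+1) → ℝ, Monotone θ' → irObj (n+1) ω y θ ≤ irObj (n+1) ω y θ') ↔
      ((∀ i : Fin n, 0 ≤ ∑ j ∈ Finset.Iic i.castSucc, ω j * (y j - θ j)) ∧
       (∑ j, ω j * (y j - θ j)) = 0 ∧
       (∀ i : Fin n,
         (∑ j ∈ Finset.Iic i.castSucc, ω j * (y j - θ j)) * (θ i.succ - θ i.castSucc) = 0)) := by
  set r : Fin (n+1) → ℝ := fun i => ω i * (y i - θ i) with hr
  set W : ℝ := ∑ j, ω j with hWdef
  have hW : 0 < W := Finset.sum_pos (fun i _ => hω i) Finset.univ_nonempty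
  constructor
  · intro hopt
    have key : ∀ θ' : Fin (n+1) → ℝ, Monotone θ' →
        0 ≤ (∑ i, (-(r i) * (θ' i - θ i))) + (1/2) * ∑ i, ω i * (θ' i - θ i)^2 := by
      intro θ' h
      have h2 := hopt θ' h
      rw [ir_expand (n+1) ω y θ θ'] at h2
      linarith
    -- nonnegativity of partial sums
    have hpos : ∀ i : Fin n, 0 ≤ ∑ j ∈ Finset.Iic i.castSucc, r j := by
      intro i
      by_contra hneg
      push_neg at hneg
      set S : ℝ := ∑ j ∈ Finset.Iic i.castSucc, r j with hSdef
      set t : ℝ := -S / W with htdef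
      have ht : 0 < t := div_pos (by linarith) hW
      set θ' : Fin (n+1) → ℝ := fun j => θ j - (if j ≤ i.castSucc then t else 0) with hθ'def
      have hmono : Monotone θ' := by
        intro a b hab
        simp only [hθ'def]
        split_ifs with h1 h2 h2
        · linarith [hθ hab]
        · linarith [hθ hab, ht.le]
        · exact absurd (hab.trans h2) h1
        · linarith [hθ hab]
      have hA : (∑ j, (-(r j) * (θ' j - θ j))) = t * S := by
        have : ∀ j ∈ Finset.univ, (-(r j) * (θ' j - θ j))
            = if j ∈ Finset.Iic i.castSucc then r j * t else 0 := by
          intro j _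
          simp only [hθ'def, Finset.mem_Iic]
          split_ifs with h1
          · ring
          · ring
        rw [Finset.sum_congr rfl this, Finset.sum_ite_mem, Finset.univ_inter,
          ← Finset.sum_mul]
        rw [mul_comm]
      have hB : (∑ j, ω j * (θ' j - θ j)^2) ≤ W * t^2 := by
        rw [hWdef, Finset.sum_mul]
        refine Finset.sum_le_sum fun j _ => ?_
        simp only [hθ'def]
        split_ifs with h1
        · apply le_of_eq; ring
        · have := (hω j).le; nlinarith [sq_nonneg t]
      have h0 := key θ' hmono
      rw [hA] at h0
      have h0' : 0 ≤ t * S + (1/2) * (W * t^2) := by nlinarith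
      have htW : t * W = -S := by rw [htdef]; field_simp [ne_of_gt hW]
      nlinarith [sq_nonneg S, mul_pos ht hW]
    refine ⟨hpos, ?_, ?_⟩
    · -- total sum is zero
      set T : ℝ := ∑ j, r j with hTdef
      set t : ℝ := T / W with htdef
      set θ' : Fin (n+1) → ℝ := fun j => θ j + t with hθ'def
      have hmono : Monotone θ' := fun a b hab => by
        simp only [hθ'def]; linarith [hθ hab]
      have h0 := key θ' hmono
      have hA : (∑ j, (-(r j) * (θ' j - θ j))) = -(t * T) := by
        simp only [hθ'def, add_sub_cancel_left, hTdef]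
        have h1 : (∑ i, -r i * t) = -∑ i, r i * t := by
          rw [← Finset.sum_neg_distrib]; exact Finset.sum_congr rfl fun i _ => by ring
        rw [h1, ← Finset.sum_mul]; ring
      have hB : (∑ j, ω j * (θ' j - θ j)^2) = W * t^2 := by
        simp only [hθ'def, add_sub_cancel_left, hWdef]
        rw [Finset.sum_mul]
      rw [hA, hB] at h0
      have htW : t * W = T := by rw [htdef]; field_simp [ne_of_gt hW]
      nlinarith [sq_nonneg T]
    · -- complementarity
      intro i
      by_contra hne
      rcases mul_ne_zero_iff.mp hne with ⟨h1, h2⟩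
      set S : ℝ := ∑ j ∈ Finset.Iic i.castSucc, r j with hSdef
      have hS : 0 < S := lt_of_le_of_ne (hpos i) (Ne.symm h1)
      have hgap : 0 < θ i.succ - θ i.castSucc := by
        rcases lt_or_eq_of_le (hθ (Fin.castSucc_le_succ i)) with h | h
        · linarith
        · exact absurd (by rw [h]; ring) h2
      set t : ℝ := min (θ i.succ - θ i.castSucc) (S / W) with htdef
      have ht : 0 < t := lt_min hgap (div_pos hS hW)
      set θ' : Fin (n+1) → ℝ := fun j => θ j + (if j ≤ i.castSucc then t else 0) with hθ'def
      have hmono : Monotone θ' := by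
        intro a b hab
        simp only [hθ'def]
        split_ifs with ha hb hb
        · linarith [hθ hab]
        · have hb' : i.succ ≤ b := Fin.castSucc_lt_iff_succ_le.mp (lt_of_not_ge hb)
          have := hθ ha
          have := hθ hb'
          have := min_le_left (θ i.succ - θ i.castSucc) (S / W)
          linarith
        · exact absurd (hab.trans hb) ha
        · linarith [hθ hab]
      have hA : (∑ j, (-(r j) * (θ' j - θ j))) = -(t * S) := by
        have : ∀ j ∈ Finset.univ, (-(r j) * (θ' j - θ j))
            = if j ∈ Finset.Iic i.castSucc then -(r j * t) else 0 := by
          intro j _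
          simp only [hθ'def, Finset.mem_Iic]
          split_ifs with hj
          · ring
          · ring
        rw [Finset.sum_congr rfl this, Finset.sum_ite_mem, Finset.univ_inter,
          Finset.sum_neg_distrib, ← Finset.sum_mul, ← hSdef]
        ring
      have hB : (∑ j, ω j * (θ' j - θ j)^2) ≤ W * t^2 := by
        rw [hWdef, Finset.sum_mul]
        refine Finset.sum_le_sum fun j _ => ?_
        simp only [hθ'def]
        split_ifs with hj
        · apply le_of_eq; ring
        · have := (hω j).le; nlinarith [sq_nonneg t]
      have h0 := key θ' hmono
      rw [hA] at h0
      have htW : t * W ≤ S := by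
        rw [← le_div_iff₀ hW]
        exact min_le_right _ _
      nlinarith
  · rintro ⟨hS, hT, hC⟩ θ' hθ'
    rw [ir_expand (n+1) ω y θ θ']
    have hB : 0 ≤ (1/2) * ∑ i, ω i * (θ' i - θ i)^2 := by
      have : 0 ≤ ∑ i, ω i * (θ' i - θ i)^2 :=
        Finset.sum_nonneg fun i _ => mul_nonneg (hω i).le (sq_nonneg _)
      linarith
    have hA : 0 ≤ ∑ i, (-(r i) * (θ' i - θ i)) := by
      have hsum : (∑ i, (-(r i) * (θ' i - θ i))) = -(∑ i, r i * (θ' i - θ i)) := by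
        rw [← Finset.sum_neg_distrib]
        exact Finset.sum_congr rfl fun i _ => by ring
      rw [hsum, neg_nonneg]
      set r' : ℕ → ℝ := fun k => if h : k < n+1 then r ⟨k, h⟩ else 0 with hr'def
      set d' : ℕ → ℝ := fun k => if h : k < n+1 then (θ' ⟨k, h⟩ - θ ⟨k, h⟩) else 0 with hd'def
      have hrw : (∑ i, r i * (θ' i - θ i)) = ∑ k ∈ range (n+1), r' k * d' k := by
        rw [← Fin.sum_univ_eq_sum_range (fun k => r' k * d' k) (n+1)]
        refine Finset.sum_congr rfl fun i _ => ?_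
        simp [hr'def, hd'def, i.isLt, Fin.is_le i]
      rw [hrw, ir_abel r' d' n]
      have hlast : (∑ j ∈ range (n+1), r' j) = 0 := by
        rw [← Fin.sum_univ_eq_sum_range r' (n+1)]
        rw [← hT]
        exact Finset.sum_congr rfl fun i _ => by simp [hr'def, i.isLt, Fin.is_le i]
      rw [hlast, zero_mul, add_zero]
      refine Finset.sum_nonpos fun k hk => ?_
      rw [Finset.mem_range] at hk
      have hk1 : k < n + 1 := by omega
      have hk2 : k + 1 < n + 1 := by omega
      have hSk : (∑ j ∈ range (k+1), r' j) = ∑ j ∈ Finset.Iic ((⟨k, hk⟩ : Fin n).castSucc), r j := by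
        rw [ir_sum_Iic n r ((⟨k, hk⟩ : Fin n).castSucc)]
        rfl
      have hd1 : d' k = θ' ⟨k, hk1⟩ - θ ⟨k, hk1⟩ := by simp [hd'def, hk1, hk.le]
      have hd2 : d' (k+1) = θ' ⟨k+1, hk2⟩ - θ ⟨k+1, hk2⟩ := by simp [hd'def, hk2, hk]
      rw [hSk, hd1, hd2]
      have hCk := hC ⟨k, hk⟩
      have hcs : (⟨k, hk⟩ : Fin n).castSucc = (⟨k, hk1⟩ : Fin (n+1)) := rfl
      have hsucc : (⟨k, hk⟩ : Fin n).succ = (⟨k+1, hk2⟩ : Fin (n+1)) := rfl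
      rw [hcs, hsucc] at hCk
      have hSk0 := hS ⟨k, hk⟩
      rw [hcs] at hSk0
      have hmono' : θ' ⟨k, hk1⟩ ≤ θ' ⟨k+1, hk2⟩ := hθ' (by simp [Fin.mk_le_mk])
      rw [hcs]
      nlinarith [hSk0, hCk, hmono']
    linarith
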